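/- If F : V → U satisfies A F = 0 for A = Σ_j a_j dπ^B(X_j) (derived action on fiducial operators), then for every f ∈ V the covariant transform W f(g) = F(π(g⁻¹)f) satisfies D(Wf) = 0 where D = Σ_j ā_j X_j^L is the corresponding left-invariant differential operator; verify this concretely for the affine group: if F : C^∞ → ℂ is linear continuous and F(f + x f' + i f') = 0 for all test functions f, then the function Φ(a,b) = F(ρ(a,b)⁻¹ f) with [ρ(g)f](x) = a f(ax+b) (g⁻¹ = (a,b), p = 1) satisfies a(∂_b + i∂_a)Φ = 0. -/

import Mathlib

open Complex MeasureTheory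
open scoped ContDiff


lemma xI_ne (x : ℝ) : (x : ℂ) + Complex.I ≠ 0 := by
  intro h
  have := congrArg Complex.im h
  simp at this

lemma hasDerivAt_xI (x : ℝ) : HasDerivAt (fun y : ℝ => ((y : ℂ) + Complex.I)) 1 x := by
  simpa using (Complex.ofRealCLM.hasDerivAt (x := x)).add_const Complex.I

lemma hasDerivAt_q (x : ℝ) :
    HasDerivAt (fun y : ℝ => ((y : ℂ) + Complex.I)⁻¹)
      (-(((x:ℂ) + Complex.I) ^ 2)⁻¹) x := by
  have h2 := (hasDerivAt_inv (xI_ne x)).comp x (hasDerivAt_xI x)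
  simpa [Function.comp_def] using h2

lemma iteratedDeriv_q (n : ℕ) :
    iteratedDeriv n (fun y : ℝ => ((y : ℂ) + Complex.I)⁻¹)
      = fun x : ℝ => (-1 : ℂ)^n * (n.factorial : ℂ) * ((x:ℂ) + Complex.I) ^ (-(n:ℤ) - 1) := by
  induction n with
  | zero =>
    funext x
    simp [zpow_neg]
  | succ n ih =>
    funext x
    rw [iteratedDeriv_succ, ih]
    have h2 : HasDerivAt (fun z : ℂ => z ^ (-(n:ℤ) - 1)) ((-(n:ℤ) - 1) * ((x:ℂ) + Complex.I) ^ (-(n:ℤ) - 2)) ((x:ℂ) + Complex.I) := by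
      simpa [sub_sub] using hasDerivAt_zpow (-(n:ℤ) - 1) ((x:ℂ) + Complex.I) (Or.inl (xI_ne x))
    have h3 := (h2.comp x (hasDerivAt_xI x)).const_mul ((-1 : ℂ)^n * (n.factorial : ℂ))
    rw [show (fun x:ℝ => (-1:ℂ)^n * (n.factorial:ℂ) * ((x:ℂ) + Complex.I) ^ (-(n:ℤ)-1)) = (fun x:ℝ => (-1:ℂ)^n * (n.factorial:ℂ) * ((fun z : ℂ => z ^ (-(n:ℤ) - 1)) ∘ (fun y:ℝ => (y:ℂ)+Complex.I)) x) from rfl]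
    rw [h3.deriv]
    have : (-(n:ℤ) - 2) = (-((n:ℕ)+1:ℕ):ℤ) - 1 := by push_cast; ring
    rw [this]
    rw [Nat.factorial_succ]
    push_cast
    ring

lemma q_temperate : Function.HasTemperateGrowth (fun y : ℝ => ((y : ℂ) + Complex.I)⁻¹) := by
  refine ⟨(Complex.ofRealCLM.contDiff.add contDiff_const).inv (fun x => xI_ne x),
    fun n => ⟨0, n.factorial, fun x => ?_⟩⟩
  rw [norm_iteratedFDeriv_eq_norm_iteratedDeriv, iteratedDeriv_q]
  have h1 : (1:ℝ) ≤ ‖(x:ℂ)+Complex.I‖ := by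
    have := Complex.abs_im_le_norm ((x:ℂ)+Complex.I)
    simpa using this
  have h2 : ‖((x:ℂ)+Complex.I) ^ (-(n:ℤ) - 1)‖ ≤ 1 := by
    rw [norm_zpow]
    apply zpow_le_one_of_nonpos₀ h1
    omega
  calc ‖(-1 : ℂ)^n * (n.factorial : ℂ) * ((x:ℂ) + Complex.I) ^ (-(n:ℤ) - 1)‖
      = (n.factorial : ℝ) * ‖((x:ℂ) + Complex.I) ^ (-(n:ℤ) - 1)‖ := by
        simp [norm_mul, Complex.norm_natCast]
    _ ≤ (n.factorial : ℝ) * 1 := by gcongr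
    _ ≤ (n.factorial : ℝ) * (1 + ‖x‖)^0 := by simp

set_option maxHeartbeats 1000000 in
lemma F_annihilates (F : SchwartzMap ℝ ℂ →L[ℂ] ℂ)
    (hF : ∀ g h : SchwartzMap ℝ ℂ,
      (∀ x : ℝ, h x = g x + (x : ℂ) * deriv (fun y : ℝ => g y) x
        + Complex.I * deriv (fun y : ℝ => g y) x) → F h = 0)
    (f h : SchwartzMap ℝ ℂ) (a b a' b' : ℝ) (ha : 0 < a) (ha' : 0 < a')
    (hh : ∀ x : ℝ, h x = (a' : ℂ) * f (a'*x+b') - (a : ℂ) * f (a*x+b)) :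
    F h = 0 := by
  classical
  set V : ℝ → ℂ := fun y => ∫ t in (0:ℝ)..y, f t with hV
  have hint : ∀ u v : ℝ, IntervalIntegrable f volume u v :=
    fun u v => f.integrable.intervalIntegrable
  have hVd : ∀ y : ℝ, HasDerivAt V (f y) y := by
    intro y
    exact intervalIntegral.integral_hasDerivAt_right (hint 0 y)
      (f.continuous.stronglyMeasurable.stronglyMeasurableAtFilter)
      f.continuous.continuousAt
  set W0 : ℝ → ℂ := fun x => V (a'*x+b') - V (a*x+b) with hW0
  have hlin : ∀ (c d : ℝ) (x : ℝ), HasDerivAt (fun y : ℝ => c*y+d) c x := by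
    intro c d x
    simpa using ((hasDerivAt_id x).const_mul c).add_const d
  have hW0d : ∀ x : ℝ, HasDerivAt W0 (h x) x := by
    intro x
    have h1 := (hVd (a'*x+b')).scomp x (hlin a' b' x)
    have h2 := (hVd (a*x+b)).scomp x (hlin a b x)
    have h3 := h1.sub h2
    have he : h x = a' • f (a'*x+b') - a • f (a*x+b) := by
      rw [hh x]; simp [real_smul]
    rw [he]
    exact h3
  have hderiv : deriv W0 = ⇑h := funext fun x => (hW0d x).deriv
  have hsmooth : ContDiff ℝ ∞ W0 := by
    rw [contDiff_infty_iff_deriv]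
    exact ⟨fun x => (hW0d x).differentiableAt, by rw [hderiv]; exact h.smooth'⟩
  have hdecay : ∀ k n : ℕ, ∃ C, ∀ x, ‖x‖^k * ‖iteratedFDeriv ℝ n W0 x‖ ≤ C := by
    intro k n
    match n with
    | Nat.succ m =>
      obtain ⟨C, hC⟩ := h.decay' k m
      refine ⟨C, fun x => ?_⟩
      rw [norm_iteratedFDeriv_eq_norm_iteratedDeriv, iteratedDeriv_succ', hderiv,
        ← norm_iteratedFDeriv_eq_norm_iteratedDeriv]
      exact hC x
    | 0 =>
      set M : ℝ := 2^(k+1) * (Finset.Iic ((k+1 : ℕ), (0:ℕ))).sup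
        (fun m => SchwartzMap.seminorm ℝ m.1 m.2) f with hMdef
      have hM : ∀ t : ℝ, (1+‖t‖)^(k+1) * ‖f t‖ ≤ M := by
        intro t
        simpa using SchwartzMap.one_add_le_sup_seminorm_apply (𝕜 := ℝ)
          (m := ((k+1 : ℕ), (0:ℕ))) le_rfl le_rfl f t
      have hMpos : 0 ≤ M := le_trans (by positivity) (hM 0)
      set m0 : ℝ := min a a' with hm0
      have hm0pos : 0 < m0 := lt_min ha ha'
      set B : ℝ := max |b| |b'| with hB
      have hBpos : 0 ≤ B := le_trans (abs_nonneg b) (le_max_left _ _)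
      set c : ℝ := max 1 m0⁻¹ * (1+B) with hc
      have hmx1 : (1:ℝ) ≤ max 1 m0⁻¹ := le_max_left _ _
      have hmx2 : m0⁻¹ ≤ max 1 m0⁻¹ := le_max_right _ _
      have hcpos : 0 < c := by positivity
      set D : ℝ := |a'-a| + |b'-b| with hD
      have hDpos : 0 ≤ D := by positivity
      have claim1 : ∀ x : ℝ, ∀ t ∈ Set.uIoc (a*x+b) (a'*x+b'),
          (1+‖x‖) ≤ c * (1+‖t‖) := by
        intro x t ht
        have hb1 : -B ≤ b := by have := neg_abs_le b; have := le_max_left |b| |b'|; linarith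
        have hb2 : b ≤ B := le_trans (le_abs_self b) (le_max_left _ _)
        have hb1' : -B ≤ b' := by have := neg_abs_le b'; have := le_max_right |b| |b'|; linarith
        have hb2' : b' ≤ B := le_trans (le_abs_self b') (le_max_right _ _)
        have hma : m0 ≤ a := min_le_left _ _
        have hma' : m0 ≤ a' := min_le_right _ _
        have htl : min (a*x+b) (a'*x+b') < t := ht.1
        have htr : t ≤ max (a*x+b) (a'*x+b') := ht.2
        have h1 : m0 * |x| ≤ |t| + B := by
          rcases le_or_gt 0 x with hx | hx
          · rw [_root_.abs_of_nonneg hx]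
            have h5 : m0 * x ≤ t + B := by
              rcases min_cases (a*x+b) (a'*x+b') with ⟨he, _⟩ | ⟨he, _⟩ <;> rw [he] at htl <;>
                nlinarith
            have := le_abs_self t
            linarith
          · rw [_root_.abs_of_neg hx]
            have h5 : t ≤ m0 * x + B := by
              rcases max_cases (a*x+b) (a'*x+b') with ⟨he, _⟩ | ⟨he, _⟩ <;> rw [he] at htr <;>
                nlinarith
            have := neg_abs_le t
            linarith
        have h1' : ‖x‖ ≤ max 1 m0⁻¹ * (‖t‖ + B) := by
          rw [Real.norm_eq_abs, Real.norm_eq_abs]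
          have h6 : |x| ≤ m0⁻¹ * (|t| + B) := by
            rw [inv_mul_eq_div, le_div_iff₀ hm0pos]
            nlinarith [h1]
          calc |x| ≤ m0⁻¹ * (|t| + B) := h6
            _ ≤ max 1 m0⁻¹ * (|t| + B) := by
              apply mul_le_mul_of_nonneg_right hmx2
              positivity
        have htn : (0:ℝ) ≤ ‖t‖ := norm_nonneg t
        have hprod : 0 ≤ max 1 m0⁻¹ * B * ‖t‖ := by positivity
        rw [hc]
        nlinarith
      have claim2 : ∀ x : ℝ, ‖W0 x‖ ≤
          M * c^(k+1) / (1+‖x‖)^(k+1) * |(a'*x+b') - (a*x+b)| := by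
        intro x
        have hWint : W0 x = ∫ t in (a*x+b)..(a'*x+b'), f t := by
          show V (a'*x+b') - V (a*x+b) = _
          simp only [hV]
          exact intervalIntegral.integral_interval_sub_left (hint 0 (a'*x+b'))
            (hint 0 (a*x+b))
        rw [hWint]
        apply intervalIntegral.norm_integral_le_of_norm_le_const
        intro t ht
        have hpx : (0:ℝ) < (1+‖x‖)^(k+1) := by positivity
        rw [le_div_iff₀ hpx]
        have e1 : (1+‖x‖)^(k+1) ≤ c^(k+1) * (1+‖t‖)^(k+1) := by
          rw [← mul_pow]
          apply pow_le_pow_left₀ (by positivity) (claim1 x t ht)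
        calc ‖f t‖ * (1+‖x‖)^(k+1) ≤ ‖f t‖ * (c^(k+1) * (1+‖t‖)^(k+1)) := by
              apply mul_le_mul_of_nonneg_left e1 (norm_nonneg _)
          _ = c^(k+1) * ((1+‖t‖)^(k+1) * ‖f t‖) := by ring
          _ ≤ c^(k+1) * M := by
              apply mul_le_mul_of_nonneg_left (hM t) (by positivity)
          _ = M * c^(k+1) := by ring
      refine ⟨M * c^(k+1) * D, fun x => ?_⟩
      have hvu : |(a'*x+b') - (a*x+b)| ≤ D * (1+‖x‖) := by
        have e2 : (a'*x+b') - (a*x+b) = (a'-a)*x + (b'-b) := by ring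
        rw [e2]
        calc |(a'-a)*x + (b'-b)| ≤ |(a'-a)*x| + |b'-b| := abs_add_le _ _
          _ = |a'-a| * ‖x‖ + |b'-b| := by rw [abs_mul, Real.norm_eq_abs]
          _ ≤ D * (1+‖x‖) := by
              rw [hD]
              nlinarith [abs_nonneg (a'-a), abs_nonneg (b'-b), norm_nonneg x]
      have hP : (0:ℝ) < 1 + ‖x‖ := by positivity
      calc ‖x‖^k * ‖iteratedFDeriv ℝ 0 W0 x‖
          = ‖x‖^k * ‖W0 x‖ := by rw [norm_iteratedFDeriv_zero]
        _ ≤ (1+‖x‖)^k * (M * c^(k+1) / (1+‖x‖)^(k+1) * (D * (1+‖x‖))) := by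
            apply mul_le_mul
            · apply pow_le_pow_left₀ (norm_nonneg x); linarith
            · refine le_trans (claim2 x) ?_
              apply mul_le_mul_of_nonneg_left hvu (by positivity)
            · exact norm_nonneg _
            · positivity
        _ = M * c^(k+1) * D := by
            field_simp
            ring
  set W : SchwartzMap ℝ ℂ := ⟨W0, hsmooth, hdecay⟩ with hWdef
  set g : SchwartzMap ℝ ℂ :=
    SchwartzMap.bilinLeftCLM (ContinuousLinearMap.mul ℝ ℂ) q_temperate W with hgdef
  have hgcoe : ⇑g = fun y : ℝ => W0 y * ((y:ℂ) + Complex.I)⁻¹ := rfl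
  apply hF g h
  intro x
  have hd : deriv (fun y : ℝ => g y) x
      = h x * ((x:ℂ) + Complex.I)⁻¹ + W0 x * (-((((x:ℂ) + Complex.I)) ^ 2)⁻¹) := by
    have : (fun y : ℝ => g y) = fun y : ℝ => W0 y * ((y:ℂ) + Complex.I)⁻¹ := rfl
    rw [this]
    exact ((hW0d x).mul (hasDerivAt_q x)).deriv
  rw [hd, show g x = W0 x * ((x:ℂ) + Complex.I)⁻¹ from rfl]
  have hz := xI_ne x
  have key : ∀ (z u w : ℂ), z ≠ 0 →
      w * z⁻¹ + z * (u * z⁻¹ + w * (-(z^2)⁻¹)) = u := by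
    intro z u w hz
    field_simp
    ring
  linear_combination -key ((x:ℂ) + Complex.I) (h x) (W0 x) hz

/-- If a continuous linear functional `F` on Schwartz space annihilates
`g + x g' + i g'` for every Schwartz function `g` (i.e. `A F = 0` for
`A = dρ_A + i dρ_N`), then the covariant transform
`Φ (a,b) = F (ρ ((a,b)⁻¹) f)`, where `[ρ ((a,b)⁻¹) f](x) = a f (a x + b)`,
satisfies the Cauchy–Riemann type equation `∂_b Φ + i ∂_a Φ = 0`. -/
theorem covariant_transform_cauchy_riemann
    (F : SchwartzMap ℝ ℂ →L[ℂ] ℂ)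
    (hF : ∀ g h : SchwartzMap ℝ ℂ,
      (∀ x : ℝ, h x = g x + (x : ℂ) * deriv (fun y : ℝ => g y) x
        + Complex.I * deriv (fun y : ℝ => g y) x) → F h = 0)
    (f : SchwartzMap ℝ ℂ)
    (ρf : ℝ → ℝ → SchwartzMap ℝ ℂ)
    (hρf : ∀ (a b : ℝ), 0 < a → ∀ x : ℝ, (ρf a b) x = (a : ℂ) * f (a * x + b))
    (Φ : ℝ → ℝ → ℂ) (hΦ : ∀ a b : ℝ, Φ a b = F (ρf a b)) :
    ∀ (a b : ℝ), 0 < a →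
      deriv (fun t => Φ a t) b + Complex.I * deriv (fun t => Φ t b) a = 0 := by
  intro a b ha
  have key : ∀ a' b' : ℝ, 0 < a' → F (ρf a' b') = F (ρf a b) := by
    intro a' b' ha'
    have h0 : F (ρf a' b' - ρf a b) = 0 := by
      apply F_annihilates F hF f (ρf a' b' - ρf a b) a b a' b' ha ha'
      intro x
      rw [SchwartzMap.sub_apply, hρf a b ha x, hρf a' b' ha' x]
    rw [map_sub] at h0
    exact sub_eq_zero.mp h0
  have hb : (fun t => Φ a t) = fun _ => Φ a b := by
    funext t
    rw [hΦ a t, hΦ a b]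
    exact key a t ha
  have haev : (fun t => Φ t b) =ᶠ[nhds a] fun _ => Φ a b := by
    filter_upwards [Ioi_mem_nhds ha] with t ht
    rw [hΦ t b, hΦ a b]
    exact key t b ht
  have d1 : deriv (fun t => Φ a t) b = 0 := by rw [hb]; exact deriv_const b _
  have d2 : deriv (fun t => Φ t b) a = 0 := by
    rw [haev.deriv_eq]; exact deriv_const a _
  rw [d1, d2]
  simp
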